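/- Let τ > 0, b_0 = 11/(6τ), b_1 = -7/(6τ), b_2 = 1/(3τ), b_j = 0 for j ≥ 3, and ϑ the DOC kernels with Σ_{j=k}^{n} ϑ_{n-j} b_{j-k} = δ_{nk} for n ≥ k ≥ 3. Then for any sequence (e^j)_{j≥1} in a real vector space, and n ≥ k ≥ 3, Σ_{l=3}^{k} ϑ_{k-l} Σ_{j=1}^{l} b_{l-j} (e^j - e^{j-1}) = (e^k - e^{k-1}) + Σ_{l=3}^{k} ϑ_{k-l} b_{l-1} (e^1 - e^0) + Σ_{l=3}^{k} ϑ_{k-l} b_{l-2} (e^2 - e^1). -/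

import Mathlib

theorem doc_applied_to_bdf3 (τ : ℝ) (hτ : 0 < τ) (b ϑ : ℕ → ℝ)
    (hb0 : b 0 = 11/(6*τ)) (hb1 : b 1 = -(7/(6*τ))) (hb2 : b 2 = 1/(3*τ))
    (hb : ∀ j, 3 ≤ j → b j = 0)
    (horth : ∀ n k : ℕ, 3 ≤ k → k ≤ n →
      ∑ j ∈ Finset.Icc k n, ϑ (n-j) * b (j-k) = if n = k then 1 else 0)
    (V : Type*) [AddCommGroup V] [Module ℝ V] (e : ℕ → V)
    (n k : ℕ) (hk : 3 ≤ k) (hkn : k ≤ n) :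
    ∑ l ∈ Finset.Icc 3 k, ϑ (k-l) • (∑ j ∈ Finset.Icc 1 l, b (l-j) • (e j - e (j-1)))
      = (e k - e (k-1))
        + ∑ l ∈ Finset.Icc 3 k, (ϑ (k-l) * b (l-1)) • (e 1 - e 0)
        + ∑ l ∈ Finset.Icc 3 k, (ϑ (k-l) * b (l-2)) • (e 2 - e 1) := by
  have hsplit : ∀ l ∈ Finset.Icc 3 k,
      ϑ (k-l) • (∑ j ∈ Finset.Icc 1 l, b (l-j) • (e j - e (j-1)))
      = (ϑ (k-l) * b (l-1)) • (e 1 - e 0) + (ϑ (k-l) * b (l-2)) • (e 2 - e 1)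
        + ∑ j ∈ Finset.Icc 3 l, (ϑ (k-l) * b (l-j)) • (e j - e (j-1)) := by
    intro l hl
    obtain ⟨hl3, hlk⟩ := Finset.mem_Icc.mp hl
    have h1 : Finset.Icc 1 l = Finset.Ioc 0 l := by rw [← Finset.Icc_add_one_left_eq_Ioc]; rfl
    have h2 : (∑ j ∈ Finset.Ioc 0 2, b (l-j) • (e j - e (j-1)))
        + ∑ j ∈ Finset.Ioc 2 l, b (l-j) • (e j - e (j-1))
        = ∑ j ∈ Finset.Ioc 0 l, b (l-j) • (e j - e (j-1)) :=
      Finset.sum_Ioc_consecutive _ (by omega) (by omega)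
    have h3 : Finset.Ioc 0 2 = ({1, 2} : Finset ℕ) := by decide
    have h4 : Finset.Ioc 2 l = Finset.Icc 3 l := by rw [← Finset.Icc_add_one_left_eq_Ioc]; rfl
    rw [h1, ← h2, h3, h4]
    rw [smul_add, Finset.smul_sum]
    simp only [Finset.sum_insert (by decide : (1:ℕ) ∉ ({2} : Finset ℕ)),
      Finset.sum_singleton, smul_add, smul_smul]
    rw [Finset.smul_sum]
    simp only [smul_smul]
  rw [Finset.sum_congr rfl hsplit]
  rw [Finset.sum_add_distrib, Finset.sum_add_distrib]
  have hswap : ∑ l ∈ Finset.Icc 3 k, ∑ j ∈ Finset.Icc 3 l, (ϑ (k-l) * b (l-j)) • (e j - e (j-1))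
      = ∑ j ∈ Finset.Icc 3 k, ∑ l ∈ Finset.Icc j k, (ϑ (k-l) * b (l-j)) • (e j - e (j-1)) := by
    apply Finset.sum_comm'
    intro l j
    simp only [Finset.mem_Icc]
    omega
  rw [hswap]
  have hmain : ∑ j ∈ Finset.Icc 3 k, ∑ l ∈ Finset.Icc j k, (ϑ (k-l) * b (l-j)) • (e j - e (j-1))
      = e k - e (k-1) := by
    have : ∀ j ∈ Finset.Icc 3 k,
        ∑ l ∈ Finset.Icc j k, (ϑ (k-l) * b (l-j)) • (e j - e (j-1))
        = (if k = j then (1:ℝ) else 0) • (e j - e (j-1)) := by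
      intro j hj
      obtain ⟨hj3, hjk⟩ := Finset.mem_Icc.mp hj
      rw [← Finset.sum_smul, horth k j hj3 hjk]
    rw [Finset.sum_congr rfl this]
    simp only [ite_smul, one_smul, zero_smul, Finset.sum_ite_eq, Finset.mem_Icc]
    simp [hk]
  rw [hmain]
  abel
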